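/- Let f ∈ L¹(ℝ^d), f ≥ 0, and λ > 0, and suppose (1/c)g(|x|) ≤ f(x) ≤ c g(|x|) for all x ≠ 0 with g decreasing, c ≥ 1. Let p_λ(x) = e^{-λ‖f‖₁} Σ_{n≥1} (λⁿ/n!) f^{*n}(x). Then for every x ≠ 0 and every unit vector θ: p_λ(x) ≤ e^{(c²−1)λ‖f‖₁} p_{c²λ}(|x|θ). -/

import Mathlib

open Filter MeasureTheory Metric

/-- The `n`-fold convolution power of `f` (with `convPow f 1 = f`;
`convPow f 0` is set to `0` by convention and is never used). -/
noncomputable def convPow (d : ℕ) (f : EuclideanSpace ℝ (Fin d) → ℝ) :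
    ℕ → EuclideanSpace ℝ (Fin d) → ℝ
  | 0 => 0
  | 1 => f
  | n + 2 => fun x => ∫ y, convPow d f (n + 1) (x - y) * f y

/-- The compound Poisson density built on `f` with intensity `l`. -/
noncomputable def cpDensity (d : ℕ) (f : EuclideanSpace ℝ (Fin d) → ℝ) (l : ℝ)
    (x : EuclideanSpace ℝ (Fin d)) : ℝ :=
  Real.exp (-l * ∫ y, f y) *
    ∑' n : ℕ, (l ^ (n + 1) / (Nat.factorial (n + 1) : ℝ)) * convPow d f (n + 1) x

section Aux

variable {d : ℕ} {f : EuclideanSpace ℝ (Fin d) → ℝ}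

private lemma convPow_two_eq (n : ℕ) (x : EuclideanSpace ℝ (Fin d)) :
    convPow d f (n + 2) x = ∫ y, convPow d f (n + 1) (x - y) * f y := rfl

private lemma convPow_nonneg (hf0 : ∀ x, 0 ≤ f x) :
    ∀ n x, 0 ≤ convPow d f n x
  | 0, _ => le_refl _
  | 1, x => hf0 x
  | (n+2), x => integral_nonneg fun y => mul_nonneg (convPow_nonneg hf0 (n+1) _) (hf0 y)

private lemma convPow_eq_conv (n : ℕ) :
    convPow d f (n + 2)
      = convolution f (convPow d f (n + 1)) (ContinuousLinearMap.mul ℝ ℝ) volume := by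
  funext x
  show (∫ y, convPow d f (n + 1) (x - y) * f y) = _
  rw [convolution_def]
  simp only [ContinuousLinearMap.mul_apply']
  simp_rw [mul_comm]

private lemma convPow_integrable (hf : Integrable f) :
    ∀ n, Integrable (convPow d f (n + 1))
  | 0 => hf
  | (n+1) => by
      rw [convPow_eq_conv]
      exact hf.integrable_convolution _ (convPow_integrable hf n)

private lemma convPow_integral (hf : Integrable f) :
    ∀ n, ∫ x, convPow d f (n + 1) x = (∫ x, f x) ^ (n + 1)
  | 0 => (pow_one _).symm
  | (n+1) => by
      rw [convPow_eq_conv, integral_convolution _ hf (convPow_integrable hf n),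
        convPow_integral hf n]
      simp only [ContinuousLinearMap.mul_apply']
      ring

private lemma convPow_growth {g : ℝ → ℝ} {c : ℝ}
    (hf : Integrable f) (hf0 : ∀ x, 0 ≤ f x)
    (hgpos : ∀ r : ℝ, 0 < r → 0 < g r)
    (hgdec : ∀ s t : ℝ, 0 < s → s ≤ t → g t ≤ g s)
    (hc : 1 ≤ c)
    (hcomp : ∀ x : EuclideanSpace ℝ (Fin d), x ≠ 0 →
      (1 / c) * g ‖x‖ ≤ f x ∧ f x ≤ c * g ‖x‖) :
    ∀ (n : ℕ) (x : EuclideanSpace ℝ (Fin d)) (r : ℝ), 0 < r →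
      ((n : ℝ) + 1) * r ≤ ‖x‖ →
      convPow d f (n + 1) x ≤ ((n : ℝ) + 1) * c * g r * (∫ y, f y) ^ n := by
  have hc0 : (0:ℝ) < c := lt_of_lt_of_le one_pos hc
  have hI0 : (0:ℝ) ≤ ∫ y, f y := integral_nonneg hf0
  intro n
  induction n with
  | zero =>
    intro x r hr hxr
    have hx : x ≠ 0 := by
      intro h; rw [h, norm_zero] at hxr; nlinarith
    have h1 : f x ≤ c * g ‖x‖ := (hcomp x hx).2
    have h2 : g ‖x‖ ≤ g r := hgdec r ‖x‖ hr (by nlinarith)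
    have he : convPow d f (0+1) x = f x := rfl
    rw [he]
    push_cast
    simp only [pow_zero, mul_one, zero_add, one_mul]
    nlinarith
  | succ n ih =>
    intro x r hr hxr
    push_cast at hxr ⊢
    set I := ∫ y, f y with hI
    set F := convPow d f (n+1) with hF
    have hF0 : ∀ z, 0 ≤ F z := fun z => convPow_nonneg hf0 _ z
    have hgr : 0 < g r := hgpos r hr
    by_cases hint : Integrable (fun y => F (x - y) * f y)
    · have hS : MeasurableSet {y : EuclideanSpace ℝ (Fin d) | r ≤ ‖y‖} :=
        measurableSet_le measurable_const measurable_norm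
      set S := {y : EuclideanSpace ℝ (Fin d) | r ≤ ‖y‖} with hSdef
      have hFi : Integrable F := convPow_integrable hf n
      have hFint : Integrable (fun y => F (x - y)) := hFi.comp_sub_left x
      have key1 : ∫ y in S, F (x - y) * f y ≤ c * g r * I ^ (n+1) := by
        have step : ∫ y in S, F (x - y) * f y ≤ ∫ y in S, F (x - y) * (c * g r) := by
          refine setIntegral_mono_on hint.integrableOn (hFint.mul_const _).integrableOn hS ?_
          intro y hy
          have hy0 : y ≠ 0 := by
            intro h; subst h
            rw [Set.mem_setOf_eq, norm_zero] at hy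
            exact absurd hy (not_le.2 hr)
          have := (hcomp y hy0).2
          have hgy : g ‖y‖ ≤ g r := hgdec r ‖y‖ hr hy
          have : f y ≤ c * g r := by nlinarith
          exact mul_le_mul_of_nonneg_left this (hF0 _)
        refine step.trans ?_
        rw [integral_mul_const]
        have h1 : ∫ y in S, F (x - y) ≤ ∫ y, F (x - y) :=
          setIntegral_le_integral hFint (Filter.Eventually.of_forall fun y => hF0 _)
        have h2 : ∫ y, F (x - y) = I ^ (n+1) := by
          rw [integral_sub_left_eq_self F volume x, hF, convPow_integral hf n, hI]
        calc (∫ y in S, F (x - y)) * (c * g r) ≤ (I ^ (n+1)) * (c * g r) := by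
              apply mul_le_mul_of_nonneg_right _ (by positivity)
              rw [← h2]; exact h1
          _ = c * g r * I ^ (n+1) := by ring
      have key2 : ∫ y in Sᶜ, F (x - y) * f y ≤ ((n:ℝ)+1) * c * g r * I ^ n * I := by
        set M := ((n:ℝ)+1) * c * g r * I ^ n with hM
        have hM0 : 0 ≤ M := by positivity
        have step : ∫ y in Sᶜ, F (x - y) * f y ≤ ∫ y in Sᶜ, M * f y := by
          refine setIntegral_mono_on hint.integrableOn (hf.const_mul M).integrableOn hS.compl ?_
          intro y hy
          have hylt : ‖y‖ < r := not_le.1 hy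
          have hnorm : ((n:ℝ)+1) * r ≤ ‖x - y‖ := by
            have h3 : ‖x‖ - ‖y‖ ≤ ‖x - y‖ := norm_sub_norm_le x y
            nlinarith
          have := ih (x - y) r hr hnorm
          exact mul_le_mul_of_nonneg_right this (hf0 y)
        refine step.trans ?_
        rw [integral_const_mul]
        have : ∫ y in Sᶜ, f y ≤ I :=
          setIntegral_le_integral hf (Filter.Eventually.of_forall hf0)
        calc M * ∫ y in Sᶜ, f y ≤ M * I := mul_le_mul_of_nonneg_left this hM0
          _ = ((n:ℝ)+1) * c * g r * I ^ n * I := by rw [hM]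
      have hsplit : convPow d f (n + 2) x
          = (∫ y in S, F (x - y) * f y) + ∫ y in Sᶜ, F (x - y) * f y := by
        rw [convPow_two_eq, ← hF]
        exact (integral_add_compl hS hint).symm
      rw [hsplit]
      have : c * g r * I ^ (n+1) + ((n:ℝ)+1) * c * g r * I ^ n * I
          = ((n:ℝ) + 1 + 1) * c * g r * I ^ (n+1) := by ring
      nlinarith [key1, key2]
    · rw [convPow_two_eq, ← hF, integral_undef hint]
      positivity

set_option maxHeartbeats 2000000 in
private lemma aux_summable (k : ℕ) {t : ℝ} (ht : 0 ≤ t) :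
    Summable (fun n : ℕ => ((n:ℝ)+1)^k * t^n / (Nat.factorial (n+1) : ℝ)) := by
  have hgeo : Summable (fun n : ℕ => ((n:ℝ)+1)^k * (1/2:ℝ)^n) := by
    have h := summable_pow_mul_geometric_of_norm_lt_one (R := ℝ) k
      (r := 1/2) (by rw [Real.norm_eq_abs]; rw [abs_of_nonneg]; norm_num; norm_num)
    have h1 : Summable (fun n : ℕ => ((n+1:ℕ):ℝ)^k * (1/2:ℝ)^(n+1)) :=
      (summable_nat_add_iff 1).2 h
    have h2 := h1.mul_left 2
    refine h2.congr fun n => ?_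
    push_cast
    ring
  have hb : ∀ n : ℕ, ((n:ℝ)+1)^k * t^n / (Nat.factorial (n+1) : ℝ)
      ≤ Real.exp (2*t) * (((n:ℝ)+1)^k * (1/2:ℝ)^n) := by
    intro n
    have hfac1 : (0:ℝ) < (Nat.factorial n : ℝ) := by
      exact_mod_cast Nat.factorial_pos n
    have hfac2 : (0:ℝ) < (Nat.factorial (n+1) : ℝ) := by
      exact_mod_cast Nat.factorial_pos (n+1)
    have hfaclel : (Nat.factorial n : ℝ) ≤ (Nat.factorial (n+1) : ℝ) := by
      exact_mod_cast Nat.factorial_le (Nat.le_succ n)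
    have h1 : t^n / (Nat.factorial (n+1) : ℝ) ≤ t^n / (Nat.factorial n : ℝ) := by
      rw [div_le_div_iff₀ hfac2 hfac1]
      exact mul_le_mul_of_nonneg_left hfaclel (pow_nonneg ht n)
    have h2 : t^n / (Nat.factorial n : ℝ) ≤ Real.exp (2*t) * (1/2:ℝ)^n := by
      have h3 := Real.pow_div_factorial_le_exp (x := 2*t) (by linarith) n
      rw [mul_pow] at h3
      have h4 : ((2:ℝ)^n * t^n / (Nat.factorial n : ℝ)) * (1/2:ℝ)^n
          = t^n / (Nat.factorial n : ℝ) := by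
        rw [div_mul_eq_mul_div, mul_comm ((2:ℝ)^n) (t^n), mul_assoc, ← mul_pow]
        norm_num
      calc t^n / (Nat.factorial n : ℝ)
          = ((2:ℝ)^n * t^n / (Nat.factorial n : ℝ)) * (1/2:ℝ)^n := h4.symm
        _ ≤ Real.exp (2*t) * (1/2:ℝ)^n := mul_le_mul_of_nonneg_right h3 (by positivity)
    calc ((n:ℝ)+1)^k * t^n / (Nat.factorial (n+1) : ℝ)
        = ((n:ℝ)+1)^k * (t^n / (Nat.factorial (n+1) : ℝ)) := by ring
      _ ≤ ((n:ℝ)+1)^k * (Real.exp (2*t) * (1/2:ℝ)^n) :=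
          mul_le_mul_of_nonneg_left (h1.trans h2) (by positivity)
      _ = Real.exp (2*t) * (((n:ℝ)+1)^k * (1/2:ℝ)^n) := by ring
  exact Summable.of_nonneg_of_le (fun n => by positivity) hb (hgeo.mul_left (Real.exp (2*t)))

private lemma g_vol_le {g : ℝ → ℝ} {c : ℝ}
    (hd : 0 < d) (hf : Integrable f) (hf0 : ∀ x, 0 ≤ f x)
    (hgdec : ∀ s t : ℝ, 0 < s → s ≤ t → g t ≤ g s)
    (hc : 1 ≤ c)
    (hcomp : ∀ x : EuclideanSpace ℝ (Fin d), x ≠ 0 →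
      (1 / c) * g ‖x‖ ≤ f x ∧ f x ≤ c * g ‖x‖)
    {r : ℝ} (hr : 0 < r) :
    g r * (volume (ball (0 : EuclideanSpace ℝ (Fin d)) r)).toReal ≤ c * ∫ y, f y := by
  have hc0 : (0:ℝ) < c := lt_of_lt_of_le one_pos hc
  haveI : Nontrivial (EuclideanSpace ℝ (Fin d)) := by
    apply Module.nontrivial_of_finrank_pos (R := ℝ)
    rw [finrank_euclideanSpace_fin]
    exact hd
  set s : Set (EuclideanSpace ℝ (Fin d)) := ball 0 r \ {0} with hsdef
  have hs : MeasurableSet s := measurableSet_ball.diff (measurableSet_singleton 0)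
  have hμs : volume s ≠ ⊤ :=
    ((measure_mono Set.diff_subset).trans_lt measure_ball_lt_top).ne
  have hsvol : volume s = volume (ball (0 : EuclideanSpace ℝ (Fin d)) r) :=
    measure_diff_null (measure_singleton 0)
  have hconst : ∀ y ∈ s, g r / c ≤ f y := by
    intro y hy
    obtain ⟨hyb, hy0⟩ := hy
    have hy0' : y ≠ 0 := hy0
    have hyn : 0 < ‖y‖ := norm_pos_iff.2 hy0'
    have hyr : ‖y‖ ≤ r := le_of_lt (mem_ball_zero_iff.1 hyb)
    have h1 := (hcomp y hy0').1
    have h2 : g r ≤ g ‖y‖ := hgdec ‖y‖ r hyn hyr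
    have h3 : (1/c) * g r ≤ (1/c) * g ‖y‖ :=
      mul_le_mul_of_nonneg_left h2 (by positivity)
    calc g r / c = (1/c) * g r := by ring
      _ ≤ f y := h3.trans h1
  have h1 : (g r / c) * (volume s).toReal ≤ ∫ y in s, f y :=
    setIntegral_ge_of_const_le_real hs hμs hconst hf.integrableOn
  have h2 : ∫ y in s, f y ≤ ∫ y, f y :=
    setIntegral_le_integral hf (Filter.Eventually.of_forall hf0)
  have h4 : (g r / c) * (volume (ball (0 : EuclideanSpace ℝ (Fin d)) r)).toReal
      ≤ ∫ y, f y := by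
    rw [← hsvol]; exact h1.trans h2
  calc g r * (volume (ball (0 : EuclideanSpace ℝ (Fin d)) r)).toReal
      = c * ((g r / c) * (volume (ball (0 : EuclideanSpace ℝ (Fin d)) r)).toReal) := by
        field_simp
    _ ≤ c * ∫ y, f y := mul_le_mul_of_nonneg_left h4 hc0.le

set_option maxHeartbeats 1000000 in
private lemma cp_summable {g : ℝ → ℝ} {c : ℝ}
    (hd : 0 < d) (hf : Integrable f) (hf0 : ∀ x, 0 ≤ f x)
    (hgpos : ∀ r : ℝ, 0 < r → 0 < g r)
    (hgdec : ∀ s t : ℝ, 0 < s → s ≤ t → g t ≤ g s)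
    (hc : 1 ≤ c)
    (hcomp : ∀ x : EuclideanSpace ℝ (Fin d), x ≠ 0 →
      (1 / c) * g ‖x‖ ≤ f x ∧ f x ≤ c * g ‖x‖)
    {l : ℝ} (hl : 0 < l) {x : EuclideanSpace ℝ (Fin d)} (hx : x ≠ 0) :
    Summable (fun n : ℕ =>
      l ^ (n+1) / (Nat.factorial (n+1) : ℝ) * convPow d f (n+1) x) := by
  have hc0 : (0:ℝ) < c := lt_of_lt_of_le one_pos hc
  haveI : Nontrivial (EuclideanSpace ℝ (Fin d)) := by
    apply Module.nontrivial_of_finrank_pos (R := ℝ)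
    rw [finrank_euclideanSpace_fin]
    exact hd
  set I := ∫ y, f y with hI
  have hI0 : 0 ≤ I := integral_nonneg hf0
  set B := (volume (ball (0 : EuclideanSpace ℝ (Fin d)) 1)).toReal with hB
  have hB0 : 0 < B :=
    ENNReal.toReal_pos (measure_ball_pos volume (0 : EuclideanSpace ℝ (Fin d)) one_pos).ne'
      measure_ball_lt_top.ne
  have hx0 : 0 < ‖x‖ := norm_pos_iff.2 hx
  have hvol : ∀ r : ℝ, 0 < r →
      (volume (ball (0 : EuclideanSpace ℝ (Fin d)) r)).toReal = r ^ d * B := by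
    intro r hr
    rw [Measure.addHaar_ball volume (0 : EuclideanSpace ℝ (Fin d)) hr.le,
      ENNReal.toReal_mul, ENNReal.toReal_ofReal (by positivity), hB]
    congr 2
    rw [finrank_euclideanSpace_fin]
  have hgle : ∀ r : ℝ, 0 < r → g r * (r ^ d * B) ≤ c * I := by
    intro r hr
    have := g_vol_le hd hf hf0 hgdec hc hcomp hr
    rwa [hvol r hr] at this
  have hIpos : 0 < I := by
    rcases lt_or_eq_of_le hI0 with h | h
    · exact h
    · exfalso
      have h1 := hgle 1 one_pos
      rw [← h] at h1
      have hg1 : 0 < g 1 := hgpos 1 one_pos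
      rw [one_pow] at h1
      nlinarith
  set K := c^2 * l * I / (‖x‖ ^ d * B) with hK
  have hK0 : 0 < K := by positivity
  have hterm : ∀ n : ℕ,
      l ^ (n+1) / (Nat.factorial (n+1) : ℝ) * convPow d f (n+1) x
        ≤ K * (((n:ℝ)+1)^(d+1) * (l*I)^n / (Nat.factorial (n+1) : ℝ)) := by
    intro n
    set rn := ‖x‖ / ((n:ℝ)+1) with hrn
    have hrn0 : 0 < rn := by positivity
    have hgrow := convPow_growth hf hf0 hgpos hgdec hc hcomp n x rn hrn0
      (by rw [hrn]; field_simp; exact le_rfl)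
    have hrnd : rn ^ d * B > 0 := by positivity
    have hgrn : g rn ≤ c * I * ((n:ℝ)+1)^d / (‖x‖^d * B) := by
      have h1 := hgle rn hrn0
      have h2 : g rn ≤ c * I / (rn ^ d * B) := by
        rw [le_div_iff₀ hrnd]
        exact h1
      have h3 : c * I / (rn ^ d * B) = c * I * ((n:ℝ)+1)^d / (‖x‖^d * B) := by
        rw [hrn, div_pow]
        field_simp
      rw [← h3]; exact h2
    have hgrn0 : 0 ≤ g rn := (hgpos rn hrn0).le
    have hfac : (0:ℝ) < (Nat.factorial (n+1) : ℝ) := by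
      exact_mod_cast Nat.factorial_pos (n+1)
    calc l ^ (n+1) / (Nat.factorial (n+1) : ℝ) * convPow d f (n+1) x
        ≤ l ^ (n+1) / (Nat.factorial (n+1) : ℝ) * (((n:ℝ)+1) * c * g rn * I^n) := by
          apply mul_le_mul_of_nonneg_left hgrow (by positivity)
      _ ≤ l ^ (n+1) / (Nat.factorial (n+1) : ℝ) *
            (((n:ℝ)+1) * c * (c * I * ((n:ℝ)+1)^d / (‖x‖^d * B)) * I^n) := by
          apply mul_le_mul_of_nonneg_left _ (by positivity)
          apply mul_le_mul_of_nonneg_right _ (by positivity)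
          exact mul_le_mul_of_nonneg_left hgrn (by positivity)
      _ = K * (((n:ℝ)+1)^(d+1) * (l*I)^n / (Nat.factorial (n+1) : ℝ)) := by
          rw [hK]
          field_simp
          ring
  have hnonneg : ∀ n : ℕ,
      0 ≤ l ^ (n+1) / (Nat.factorial (n+1) : ℝ) * convPow d f (n+1) x := by
    intro n
    have hfac : (0:ℝ) < (Nat.factorial (n+1) : ℝ) := by
      exact_mod_cast Nat.factorial_pos (n+1)
    exact mul_nonneg (by positivity) (convPow_nonneg hf0 _ x)
  exact Summable.of_nonneg_of_le hnonneg hterm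
    ((aux_summable (d+1) (mul_nonneg hl.le hI0)).mul_left K)

private lemma f_comp_le {g : ℝ → ℝ} {c : ℝ} (hc : 1 ≤ c)
    (hcomp : ∀ x : EuclideanSpace ℝ (Fin d), x ≠ 0 →
      (1 / c) * g ‖x‖ ≤ f x ∧ f x ≤ c * g ‖x‖)
    (e : EuclideanSpace ℝ (Fin d) ≃ₗᵢ[ℝ] EuclideanSpace ℝ (Fin d))
    (x : EuclideanSpace ℝ (Fin d)) (hx : x ≠ 0) :
    f x ≤ c ^ 2 * f (e x) := by
  have hc0 : (0:ℝ) < c := lt_of_lt_of_le one_pos hc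
  have hex : e x ≠ 0 := by
    intro h
    exact hx (by simpa using e.toLinearEquiv.map_eq_zero_iff.1 h)
  have h1 := (hcomp x hx).2
  have h2 := (hcomp (e x) hex).1
  rw [e.norm_map] at h2
  have h3 : c ^ 2 * ((1/c) * g ‖x‖) = c * g ‖x‖ := by
    field_simp
  have h4 := mul_le_mul_of_nonneg_left h2 (by positivity : (0:ℝ) ≤ c^2)
  linarith

set_option maxHeartbeats 1000000 in
private lemma convPow_comp_le {g : ℝ → ℝ} {c : ℝ} (hd : 0 < d)
    (hf : Integrable f) (hf0 : ∀ x, 0 ≤ f x) (hc : 1 ≤ c)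
    (hcomp : ∀ x : EuclideanSpace ℝ (Fin d), x ≠ 0 →
      (1 / c) * g ‖x‖ ≤ f x ∧ f x ≤ c * g ‖x‖) :
    ∀ (n : ℕ) (e : EuclideanSpace ℝ (Fin d) ≃ₗᵢ[ℝ] EuclideanSpace ℝ (Fin d))
      (x : EuclideanSpace ℝ (Fin d)), x ≠ 0 →
      convPow d f (n+1) x ≤ c ^ (2*(n+1)) * convPow d f (n+1) (e x) := by
  have hc0 : (0:ℝ) < c := lt_of_lt_of_le one_pos hc
  haveI : Nontrivial (EuclideanSpace ℝ (Fin d)) := by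
    apply Module.nontrivial_of_finrank_pos (R := ℝ)
    rw [finrank_euclideanSpace_fin]
    exact hd
  have hne : ∀ (e : EuclideanSpace ℝ (Fin d) ≃ₗᵢ[ℝ] EuclideanSpace ℝ (Fin d))
      (z : EuclideanSpace ℝ (Fin d)), z ≠ 0 → e z ≠ 0 := by
    intro e z hz h
    exact hz (by simpa using e.toLinearEquiv.map_eq_zero_iff.1 h)
  intro n
  induction n with
  | zero =>
    intro e x hx
    have h := f_comp_le hc hcomp e x hx
    have he1 : convPow d f (0+1) x = f x := rfl
    have he2 : convPow d f (0+1) (e x) = f (e x) := rfl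
    rw [he1, he2]
    norm_num
    exact h
  | succ n ih =>
    intro e x hx
    set F := convPow d f (n+1) with hFdef
    have hFi : Integrable F := convPow_integrable hf n
    have hF0 : ∀ z, 0 ≤ F z := fun z => convPow_nonneg hf0 _ z
    have hmp : MeasurePreserving (⇑e) volume volume := e.measurePreserving
    have hemb : MeasurableEmbedding (⇑e) := e.toHomeomorph.measurableEmbedding
    have hqmp := hmp.quasiMeasurePreserving
    have hmpsub : MeasurePreserving (fun y : EuclideanSpace ℝ (Fin d) => x - y)
        volume volume := Measure.measurePreserving_sub_left volume x
    have hae1 : ∀ᵐ y : EuclideanSpace ℝ (Fin d), y ≠ (0 : EuclideanSpace ℝ (Fin d)) := by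
      rw [ae_iff]
      have : {y : EuclideanSpace ℝ (Fin d) | ¬ y ≠ 0} = {(0 : EuclideanSpace ℝ (Fin d))} := by
        ext y; simp
      rw [this]
      exact measure_singleton _
    have hae2 : ∀ᵐ y : EuclideanSpace ℝ (Fin d), x - y ≠ 0 := by
      rw [ae_iff]
      have : {y : EuclideanSpace ℝ (Fin d) | ¬ x - y ≠ 0} = {x} := by
        ext y; simp [sub_eq_zero, eq_comm]
      rw [this]
      exact measure_singleton _
    have hab : ∀ᵐ y : EuclideanSpace ℝ (Fin d),
        F (x - y) * f y ≤ c^(2*(n+2)) * (F (e (x - y)) * f (e y)) := by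
      filter_upwards [hae1, hae2] with y h1 h2
      have hA := ih e (x - y) h2
      have hB := f_comp_le hc hcomp e y h1
      have hmm := mul_le_mul hA hB (hf0 y) (mul_nonneg (by positivity) (hF0 _))
      calc F (x-y) * f y ≤ (c^(2*(n+1)) * F (e (x-y))) * (c^2 * f (e y)) := hmm
        _ = c^(2*(n+2)) * (F (e (x-y)) * f (e y)) := by ring
    have hba : ∀ᵐ y : EuclideanSpace ℝ (Fin d),
        F (e (x - y)) * f (e y) ≤ c^(2*(n+2)) * (F (x - y) * f y) := by
      filter_upwards [hae1, hae2] with y h1 h2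
      have hA := ih e.symm (e (x - y)) (hne e _ h2)
      rw [e.symm_apply_apply] at hA
      have hB := f_comp_le hc hcomp e.symm (e y) (hne e _ h1)
      rw [e.symm_apply_apply] at hB
      have hmm := mul_le_mul hA hB (hf0 _) (mul_nonneg (by positivity) (hF0 _))
      calc F (e (x-y)) * f (e y) ≤ (c^(2*(n+1)) * F (x-y)) * (c^2 * f y) := hmm
        _ = c^(2*(n+2)) * (F (x-y) * f y) := by ring
    have hmA : AEStronglyMeasurable (fun y : EuclideanSpace ℝ (Fin d) => F (x - y) * f y)
        volume := by
      have h1 : AEStronglyMeasurable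
          (F ∘ (fun y : EuclideanSpace ℝ (Fin d) => x - y)) volume :=
        hFi.aestronglyMeasurable.comp_quasiMeasurePreserving hmpsub.quasiMeasurePreserving
      exact h1.mul hf.aestronglyMeasurable
    have hmB : AEStronglyMeasurable
        (fun y : EuclideanSpace ℝ (Fin d) => F (e (x - y)) * f (e y)) volume := by
      have h1 : AEStronglyMeasurable (F ∘ ⇑e) volume :=
        hFi.aestronglyMeasurable.comp_quasiMeasurePreserving hqmp
      have h2 : AEStronglyMeasurable
          ((F ∘ ⇑e) ∘ (fun y : EuclideanSpace ℝ (Fin d) => x - y)) volume :=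
        h1.comp_quasiMeasurePreserving hmpsub.quasiMeasurePreserving
      have h3 : AEStronglyMeasurable (f ∘ ⇑e) volume :=
        hf.aestronglyMeasurable.comp_quasiMeasurePreserving hqmp
      exact h2.mul h3
    have hcomp_eq : ((fun y : EuclideanSpace ℝ (Fin d) => F (e x - y) * f y) ∘ ⇑e)
        = fun y : EuclideanSpace ℝ (Fin d) => F (e (x - y)) * f (e y) := by
      funext y
      simp only [Function.comp_apply, map_sub]
    have heq1 : convPow d f (n+2) x = ∫ y, F (x - y) * f y := rfl
    have heq2 : convPow d f (n+2) (e x) = ∫ y, F (e x - y) * f y := rfl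
    by_cases hA : Integrable (fun y : EuclideanSpace ℝ (Fin d) => F (x - y) * f y)
    · have hBint : Integrable
          (fun y : EuclideanSpace ℝ (Fin d) => F (e (x - y)) * f (e y)) := by
        refine Integrable.mono (hA.const_mul (c^(2*(n+2)))) hmB ?_
        filter_upwards [hba] with y hy
        rw [Real.norm_eq_abs, Real.norm_eq_abs, abs_of_nonneg (mul_nonneg (hF0 _) (hf0 _))]
        exact hy.trans (le_abs_self _)
      have h2 : ∫ y, F (e (x-y)) * f (e y) = ∫ y, F (e x - y) * f y := by
        have h2a := hmp.integral_comp hemb (fun z => F (e x - z) * f z)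
        rw [← h2a]
        congr 1
        funext y
        rw [map_sub]
      rw [heq1, heq2, ← h2]
      calc (∫ y, F (x - y) * f y)
          ≤ ∫ y, c^(2*(n+2)) * (F (e (x-y)) * f (e y)) :=
            integral_mono_ae hA (hBint.const_mul _) hab
        _ = c^(2*(n+2)) * ∫ y, F (e (x-y)) * f (e y) := integral_const_mul _ _
    · have hBnot : ¬ Integrable
          (fun y : EuclideanSpace ℝ (Fin d) => F (e (x - y)) * f (e y)) := by
        intro hB
        apply hA
        refine Integrable.mono (hB.const_mul (c^(2*(n+2)))) hmA ?_
        filter_upwards [hab] with y hy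
        rw [Real.norm_eq_abs, Real.norm_eq_abs, abs_of_nonneg (mul_nonneg (hF0 _) (hf0 _))]
        exact hy.trans (le_abs_self _)
      have hB'not : ¬ Integrable
          (fun y : EuclideanSpace ℝ (Fin d) => F (e x - y) * f y) := by
        intro h
        apply hBnot
        rw [← hcomp_eq]
        exact ((hmp.integrable_comp_emb hemb).2 h)
      rw [heq1, heq2, integral_undef hA, integral_undef hB'not]
      simp

end Aux

theorem stmt17 (d : ℕ) (f : EuclideanSpace ℝ (Fin d) → ℝ)
    (hfint : Integrable f) (hf0 : ∀ x, 0 ≤ f x) (l : ℝ) (hl : 0 < l)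
    (g : ℝ → ℝ) (hgpos : ∀ r : ℝ, 0 < r → 0 < g r)
    (hgdec : ∀ s t : ℝ, 0 < s → s ≤ t → g t ≤ g s)
    (c : ℝ) (hc : 1 ≤ c)
    (hcomp : ∀ x : EuclideanSpace ℝ (Fin d), x ≠ 0 →
      (1 / c) * g ‖x‖ ≤ f x ∧ f x ≤ c * g ‖x‖) :
    ∀ x : EuclideanSpace ℝ (Fin d), x ≠ 0 →
      ∀ θ : EuclideanSpace ℝ (Fin d), ‖θ‖ = 1 →
        cpDensity d f l x ≤
          Real.exp ((c ^ 2 - 1) * l * ∫ y, f y) * cpDensity d f (c ^ 2 * l) (‖x‖ • θ) := by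
  intro x hx θ hθ
  rcases Nat.eq_zero_or_pos d with hd | hd
  · exfalso
    apply hx
    subst hd
    ext i
    exact Fin.elim0 i
  have hc0 : (0:ℝ) < c := lt_of_lt_of_le one_pos hc
  set x' : EuclideanSpace ℝ (Fin d) := ‖x‖ • θ with hx'def
  have hnx : ‖x'‖ = ‖x‖ := by
    rw [hx'def, norm_smul, hθ, mul_one, Real.norm_eq_abs, abs_of_nonneg (norm_nonneg x)]
  have hx' : x' ≠ 0 := by
    intro h
    rw [h, norm_zero] at hnx
    exact hx (norm_eq_zero.1 hnx.symm)
  set e : EuclideanSpace ℝ (Fin d) ≃ₗᵢ[ℝ] EuclideanSpace ℝ (Fin d) :=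
    Submodule.reflection (ℝ ∙ (x - x'))ᗮ with he
  have hex : e x = x' := Submodule.reflection_sub hnx.symm
  set I := ∫ y, f y with hI
  have hterm : ∀ n : ℕ,
      l ^ (n+1) / (Nat.factorial (n+1) : ℝ) * convPow d f (n+1) x
        ≤ (c^2*l) ^ (n+1) / (Nat.factorial (n+1) : ℝ) * convPow d f (n+1) x' := by
    intro n
    have h := convPow_comp_le hd hfint hf0 hc hcomp n e x hx
    rw [hex] at h
    have hfac : (0:ℝ) < (Nat.factorial (n+1) : ℝ) := by
      exact_mod_cast Nat.factorial_pos (n+1)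
    calc l ^ (n+1) / (Nat.factorial (n+1) : ℝ) * convPow d f (n+1) x
        ≤ l ^ (n+1) / (Nat.factorial (n+1) : ℝ)
            * (c ^ (2*(n+1)) * convPow d f (n+1) x') :=
          mul_le_mul_of_nonneg_left h (by positivity)
      _ = (c^2*l) ^ (n+1) / (Nat.factorial (n+1) : ℝ) * convPow d f (n+1) x' := by
          rw [mul_pow, pow_mul]
          ring
  have hsum1 : Summable (fun n : ℕ =>
      l ^ (n+1) / (Nat.factorial (n+1) : ℝ) * convPow d f (n+1) x) :=
    cp_summable hd hfint hf0 hgpos hgdec hc hcomp hl hx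
  have hsum2 : Summable (fun n : ℕ =>
      (c^2*l) ^ (n+1) / (Nat.factorial (n+1) : ℝ) * convPow d f (n+1) x') :=
    cp_summable hd hfint hf0 hgpos hgdec hc hcomp (mul_pos (by positivity) hl) hx'
  have hts := Summable.tsum_le_tsum hterm hsum1 hsum2
  unfold cpDensity
  rw [← hI]
  have hexp : Real.exp ((c^2-1)*l*I) * Real.exp (-(c^2*l)*I) = Real.exp (-l*I) := by
    rw [← Real.exp_add]
    congr 1
    ring
  rw [← mul_assoc, hexp]
  exact mul_le_mul_of_nonneg_left hts (Real.exp_nonneg _)
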